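/- Let N be a natural number and let p, r be real numbers with 0 ≤ p ≤ r ≤ 1/2 and r > 0. Then Σ_{j=⌈rN⌉}^{N} binom(N,j)·p^j ≤ (p/r²)^{rN}, where binom(N,j) is the binomial coefficient and the right-hand side is a real power. -/

import Mathlib

open MeasureTheory Finset Filter
open scoped Pointwise

noncomputable section

/-- The lattice `ℤ^d`. -/
abbrev Zd (d : ℕ) : Type := Fin d → ℤ

/-- The `i`-th standard unit vector of `ℤ^d`. -/
def unitv (d : ℕ) (i : Fin d) : Zd d := fun j => if j = i then 1 else 0

/-- The discrete Laplacian. -/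
def discLap (d : ℕ) (v : Zd d → ℝ) (x : Zd d) : ℝ :=
  ∑ i : Fin d, (v (x + unitv d i) - 2 * v x + v (x - unitv d i))

/-- The discrete Bilaplacian. -/
def bilap (d : ℕ) (v : Zd d → ℝ) : Zd d → ℝ :=
  fun x => discLap d (fun y => discLap d v y) x

/-- Extension of `ψ : V → ℝ` by zero to all of `ℤ^d`. -/
def extZero (d : ℕ) (V : Finset (Zd d)) (ψ : ↥V → ℝ) : Zd d → ℝ :=
  fun x => if h : x ∈ V then ψ ⟨x, h⟩ else 0

/-- The membrane Hamiltonian `H_V(ψ) = (1/2)·Σ_x (Δ₁ψ̃(x))²`. -/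
def hamiltonian (d : ℕ) (V : Finset (Zd d)) (ψ : ↥V → ℝ) : ℝ :=
  (1/2) * ∑ᶠ x : Zd d, (discLap d (extZero d V ψ) x)^2

/-- The partition function `Z_V`. -/
def Zpart (d : ℕ) (V : Finset (Zd d)) : ℝ :=
  ∫ ψ : ↥V → ℝ, Real.exp (-(hamiltonian d V ψ))

/-- The pinned partition function `Z^ε_Λ`. -/
def Zeps (d : ℕ) (ε : ℝ) (Λ : Finset (Zd d)) : ℝ :=
  ∑ A ∈ Λ.powerset, ε ^ A.card * Zpart d (Λ \ A)

/-- The pinned-set measure `ζ^ε_Λ({A})`. -/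
def zeta (d : ℕ) (ε : ℝ) (Λ A : Finset (Zd d)) : ℝ :=
  ε ^ A.card * Zpart d (Λ \ A) / Zeps d ε Λ

/-- `g` is a Green's function of `V` at `y` for the discrete Bilaplacian. -/
def IsGreen (d : ℕ) (V : Finset (Zd d)) (y : Zd d) (g : Zd d → ℝ) : Prop :=
  (∀ x : Zd d, x ∉ V → g x = 0) ∧ bilap d g y = 1 ∧ ∀ x ∈ V, x ≠ y → bilap d g x = 0

/-- Entry `(i,j)` of the discrete Hessian `D¹_i D¹_{−j} u (x)`. -/
def hess (d : ℕ) (u : Zd d → ℝ) (i j : Fin d) (x : Zd d) : ℝ :=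
  u (x + unitv d i) - u (x + unitv d i - unitv d j) - u x + u (x - unitv d j)

/-- `|∇₁²u(x)|²`, the sum of squares of the entries of the discrete Hessian. -/
def hessSq (d : ℕ) (u : Zd d → ℝ) (x : Zd d) : ℝ :=
  ∑ i : Fin d, ∑ j : Fin d, (hess d u i j x)^2

/-- `|∇₁u(x)|²`, the sum of squares of the entries of the discrete gradient. -/
def gradSq (d : ℕ) (u : Zd d → ℝ) (x : Zd d) : ℝ :=
  ∑ i : Fin d, (u (x + unitv d i) - u x)^2

/-- The Euclidean norm of a point of `ℤ^d`. -/
def zNorm (d : ℕ) (x : Zd d) : ℝ := Real.sqrt (∑ i : Fin d, ((x i : ℝ))^2)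

/-- The discrete cube `Q_r(x) = (x + [−r,r]^d) ∩ ℤ^d` (integer radius `r`). -/
def cube (d : ℕ) (r : ℤ) (x : Zd d) : Finset (Zd d) :=
  Finset.Icc (fun i => x i - r) (fun i => x i + r)

lemma rpow_self_le_aux (r : ℝ) (h0 : 0 < r) (h : r ≤ 1/2) :
    r ^ r ≤ (1-r) ^ (1-r) := by
  have h1 : (0:ℝ) < 1 - r := by linarith
  set s : ℝ := r / (1-r) with hs
  have hs0 : 0 < s := div_pos h0 h1
  have hs1 : s ≤ 1 := by
    rw [hs, div_le_one h1]; linarith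
  have hsr : s * (1-r) = r := div_mul_cancel₀ r h1.ne'
  have h1smul : (1 + s) * (1-r) = 1 := by
    rw [hs]; field_simp; ring
  have h1s : 1 + s = (1-r)⁻¹ := eq_inv_of_mul_eq_one_left h1smul
  have h1s0 : (0:ℝ) < 1 + s := by linarith
  have amgm : s ^ s * (1+s) ^ (1-s) ≤ s * s + (1-s) * (1+s) :=
    Real.geom_mean_le_arith_mean2_weighted hs0.le (by linarith) hs0.le (by linarith)
      (by ring)
  have key : s ^ s * (1+s) ^ (1-s) ≤ 1 := by
    refine amgm.trans_eq ?_; ring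
  have key2 : (s ^ s * (1+s) ^ (1-s)) ^ (1-r) ≤ 1 :=
    Real.rpow_le_one (by positivity) key (by linarith)
  have expand : (s ^ s * (1+s) ^ (1-s)) ^ (1-r)
      = s ^ r * (1+s) ^ (1-2*r) := by
    rw [Real.mul_rpow (by positivity) (by positivity),
      ← Real.rpow_mul hs0.le, ← Real.rpow_mul h1s0.le, hsr]
    have hexp : (1-s)*(1-r) = 1-2*r := by nlinarith [hsr]
    rw [hexp]
  rw [expand] at key2
  have hrr : r ^ r = s ^ r * (1-r) ^ r := by
    rw [← Real.mul_rpow hs0.le h1.le, hsr]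
  have h2 : (1-r) ^ (1-r) = (1-r) ^ r * (1-r) ^ (1-2*r) := by
    rw [← Real.rpow_add h1]; ring_nf
  have h3 : (1+s) ^ (1-2*r) = ((1-r) ^ (1-2*r))⁻¹ := by
    rw [h1s, Real.inv_rpow h1.le]
  have hpow0 : (0:ℝ) < (1-r) ^ (1-2*r) := Real.rpow_pos_of_pos h1 _
  have hpowr : (0:ℝ) < (1-r) ^ r := Real.rpow_pos_of_pos h1 _
  have hfin : s ^ r ≤ (1-r) ^ (1-2*r) := by
    rw [h3, ← div_eq_mul_inv, div_le_one hpow0] at key2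
    exact key2
  rw [hrr, h2, mul_comm (s^r)]
  exact mul_le_mul_of_nonneg_left hfin hpowr.le

/-- Tail bound for binomial sums. -/
theorem binomial_tail_bound (N : ℕ) (p r : ℝ)
    (hp : 0 ≤ p) (hpr : p ≤ r) (hr : r ≤ 1/2) (hr0 : 0 < r) :
    ∑ j ∈ Finset.Icc ⌈r * (N : ℝ)⌉₊ N, (N.choose j : ℝ) * p ^ j
      ≤ (p / r^2) ^ (r * (N : ℝ)) := by
  have h1 : (0:ℝ) < 1 - r := by linarith
  rcases Nat.eq_zero_or_pos N with hN | hN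
  · subst hN
    norm_num
  -- N ≥ 1
  set m : ℕ := ⌈r * (N : ℝ)⌉₊ with hm
  have hNpos : (0:ℝ) < N := by exact_mod_cast hN
  have hrN : 0 < r * N := mul_pos hr0 hNpos
  have hm1 : 1 ≤ m := Nat.one_le_iff_ne_zero.mpr (by
    simp [hm, Nat.ceil_eq_zero, not_le, hrN])
  have hmN : m ≤ N := Nat.ceil_le.mpr (by nlinarith)
  have hrNm : r * N ≤ (m:ℝ) := Nat.le_ceil _
  rcases eq_or_lt_of_le hp with hp0 | hp0
  · -- p = 0
    have hL : ∑ j ∈ Finset.Icc m N, (N.choose j : ℝ) * p ^ j = 0 := by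
      apply Finset.sum_eq_zero
      intro j hj
      have : 1 ≤ j := le_trans hm1 (Finset.mem_Icc.mp hj).1
      rw [← hp0, zero_pow (by omega), mul_zero]
    rw [hL, ← hp0, zero_div, Real.zero_rpow hrN.ne']
  -- main case
  have hpr1 : p / r ≤ 1 := (div_le_one hr0).mpr hpr
  have hpr0 : 0 < p / r := div_pos hp0 hr0
  have step1 : ∑ j ∈ Finset.Icc m N, (N.choose j : ℝ) * p ^ j
      ≤ (p/r) ^ (r * (N:ℝ)) * ∑ j ∈ Finset.Icc m N, (N.choose j : ℝ) * r ^ j := by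
    rw [Finset.mul_sum]
    apply Finset.sum_le_sum
    intro j hj
    obtain ⟨hj1, hj2⟩ := Finset.mem_Icc.mp hj
    have hpj : p ^ j = (p/r) ^ j * r ^ j := by
      rw [← mul_pow, div_mul_cancel₀ _ hr0.ne']
    have hle : ((p/r) ^ j : ℝ) ≤ (p/r) ^ (r * (N:ℝ)) := by
      rw [← Real.rpow_natCast (p/r) j]
      exact Real.rpow_le_rpow_of_exponent_ge hpr0 hpr1
        (hrNm.trans (by exact_mod_cast hj1))
    calc (N.choose j : ℝ) * p ^ j = (p/r)^j * ((N.choose j : ℝ) * r ^ j) := by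
          rw [hpj]; ring
      _ ≤ (p/r) ^ (r * (N:ℝ)) * ((N.choose j : ℝ) * r ^ j) := by
          apply mul_le_mul_of_nonneg_right hle (by positivity)
  have step2 : ∑ j ∈ Finset.Icc m N, (N.choose j : ℝ) * r ^ j
      ≤ ((1-r) ^ (N - m))⁻¹ := by
    have hterm : ∀ j ∈ Finset.Icc m N, (N.choose j : ℝ) * r ^ j
        ≤ ((1-r) ^ (N - m))⁻¹ * ((N.choose j : ℝ) * r ^ j * (1-r) ^ (N - j)) := by
      intro j hj
      obtain ⟨hj1, hj2⟩ := Finset.mem_Icc.mp hj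
      have hpow : ((1-r) ^ (N - m) : ℝ) ≤ (1-r) ^ (N - j) :=
        pow_le_pow_of_le_one h1.le (by linarith) (Nat.sub_le_sub_left hj1 N)
      have hpos : (0:ℝ) < (1-r) ^ (N - m) := by positivity
      have h2' : (1:ℝ) ≤ (1-r)^(N-j) * ((1-r)^(N-m))⁻¹ := by
        rw [← div_eq_mul_inv]
        exact (one_le_div hpos).mpr hpow
      calc (N.choose j : ℝ) * r ^ j = (N.choose j : ℝ) * r ^ j * 1 := (mul_one _).symm
        _ ≤ (N.choose j : ℝ) * r ^ j * ((1-r)^(N-j) * ((1-r)^(N-m))⁻¹) :=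
            mul_le_mul_of_nonneg_left h2' (by positivity)
        _ = ((1-r) ^ (N - m))⁻¹ * ((N.choose j : ℝ) * r ^ j * (1-r) ^ (N - j)) := by ring
    calc ∑ j ∈ Finset.Icc m N, (N.choose j : ℝ) * r ^ j
        ≤ ∑ j ∈ Finset.Icc m N, ((1-r) ^ (N - m))⁻¹ *
            ((N.choose j : ℝ) * r ^ j * (1-r) ^ (N - j)) :=
          Finset.sum_le_sum hterm
      _ = ((1-r) ^ (N - m))⁻¹ * ∑ j ∈ Finset.Icc m N,
            ((N.choose j : ℝ) * r ^ j * (1-r) ^ (N - j)) := by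
          rw [Finset.mul_sum]
      _ ≤ ((1-r) ^ (N - m))⁻¹ * 1 := by
          apply mul_le_mul_of_nonneg_left _ (by positivity)
          calc ∑ j ∈ Finset.Icc m N, ((N.choose j : ℝ) * r ^ j * (1-r) ^ (N - j))
              ≤ ∑ j ∈ Finset.range (N+1), ((N.choose j : ℝ) * r ^ j * (1-r) ^ (N - j)) := by
                apply Finset.sum_le_sum_of_subset_of_nonneg
                · intro j hj
                  simp only [Finset.mem_range, Finset.mem_Icc] at *
                  omega
                · intro j _ _; positivity
            _ = (r + (1-r)) ^ N := by
                rw [add_pow]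
                apply Finset.sum_congr rfl
                intro j _; ring
            _ = 1 := by norm_num
      _ = ((1-r) ^ (N - m))⁻¹ := mul_one _
  have step3 : (((1-r) ^ (N - m))⁻¹ : ℝ) ≤ (1/r) ^ (r * (N:ℝ)) := by
    have key : r ^ (r * (N:ℝ)) ≤ (1-r) ^ ((N - m : ℕ) : ℝ) := by
      have e1 : r ^ (r * (N:ℝ)) = (r ^ r) ^ (N:ℕ) := by
        rw [← Real.rpow_natCast (r ^ r) N, ← Real.rpow_mul hr0.le]
      have e2 : (1-r) ^ (((1:ℝ)-r) * (N:ℝ)) = ((1-r) ^ ((1:ℝ)-r)) ^ (N:ℕ) := by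
        rw [← Real.rpow_natCast ((1-r) ^ ((1:ℝ)-r)) N, ← Real.rpow_mul h1.le]
      have c1 : r ^ (r * (N:ℝ)) ≤ (1-r) ^ (((1:ℝ)-r) * (N:ℝ)) := by
        rw [e1, e2]
        exact pow_le_pow_left₀ (Real.rpow_nonneg hr0.le _) (rpow_self_le_aux r hr0 hr) N
      refine c1.trans ?_
      apply Real.rpow_le_rpow_of_exponent_ge h1 (by linarith)
      rw [Nat.cast_sub hmN]
      linarith
    have hcast : ((1-r) ^ (N - m) : ℝ) = (1-r) ^ ((N - m : ℕ) : ℝ) := by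
      rw [Real.rpow_natCast]
    rw [hcast, one_div, Real.inv_rpow hr0.le]
    exact inv_anti₀ (Real.rpow_pos_of_pos hr0 _) key
  calc ∑ j ∈ Finset.Icc m N, (N.choose j : ℝ) * p ^ j
      ≤ (p/r) ^ (r * (N:ℝ)) * ∑ j ∈ Finset.Icc m N, (N.choose j : ℝ) * r ^ j := step1
    _ ≤ (p/r) ^ (r * (N:ℝ)) * ((1-r) ^ (N - m))⁻¹ := by
        apply mul_le_mul_of_nonneg_left step2 (Real.rpow_nonneg (by positivity) _)
    _ ≤ (p/r) ^ (r * (N:ℝ)) * (1/r) ^ (r * (N:ℝ)) := by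
        apply mul_le_mul_of_nonneg_left step3 (Real.rpow_nonneg (by positivity) _)
    _ = (p / r^2) ^ (r * (N:ℝ)) := by
        rw [← Real.mul_rpow (by positivity) (by positivity)]
        rw [div_mul_div_comm, mul_one, ← sq]
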